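/- Let H be a Hilbert algebra and a₁, …, aₙ ∈ H. Then ⋃ᵢ φ(aᵢ)^c = ((⋃ᵢ φ(aᵢ)^c)_M], i.e., every irreducible implicative filter P that omits some aᵢ is contained in an irreducible implicative filter Q that is maximal among those omitting some aⱼ. Consequently, for every U in the subalgebra generated by φ[H], (U^c)_M] = U^c, i.e., S^π(U) ⇒ U = U where S^π(U) = U ∪ (U^c)_M. -/

import Mathlib

namespace FH

variable {H : Type*}

/-- Hilbert algebra axioms for `(imp, one)`. -/
def IsHilbert (imp : H → H → H) (one : H) : Prop :=
  (∀ a b : H, imp a (imp b a) = one) ∧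
  (∀ a b c : H, imp (imp a (imp b c)) (imp (imp a b) (imp a c)) = one) ∧
  (∀ a b : H, imp a b = one → imp b a = one → a = b)

/-- The natural order of a Hilbert algebra. -/
def hle (imp : H → H → H) (one : H) (a b : H) : Prop := imp a b = one

/-- Implicative filter. -/
def IsImpFilter (imp : H → H → H) (one : H) (F : Set H) : Prop :=
  one ∈ F ∧ ∀ a b : H, a ∈ F → imp a b ∈ F → b ∈ F

/-- Irreducible implicative filter. -/
def IsIrr (imp : H → H → H) (one : H) (F : Set H) : Prop :=
  IsImpFilter imp one F ∧ F ≠ Set.univ ∧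
    ∀ F1 F2 : Set H, IsImpFilter imp one F1 → IsImpFilter imp one F2 →
      F = F1 ∩ F2 → (F = F1 ∨ F = F2)

/-- `φ(a) = {P ∈ X(H) : a ∈ P}`. -/
def phi (imp : H → H → H) (one : H) (a : H) : Set (Set H) :=
  {P | IsIrr imp one P ∧ a ∈ P}

/-- `X(H)`, the set of irreducible implicative filters. -/
def XH (imp : H → H → H) (one : H) : Set (Set H) := {P | IsIrr imp one P}

/-- Upsets of the poset `(X(H), ⊆)`. -/
def IsUp (imp : H → H → H) (one : H) (U : Set (Set H)) : Prop :=
  (∀ P ∈ U, IsIrr imp one P) ∧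
    ∀ P Q : Set H, P ∈ U → IsIrr imp one Q → P ⊆ Q → Q ∈ U

/-- Heyting implication `U ⇒ V` on upsets of `X(H)` (the complement relative to
`X(H)` of the downset generated by `U ∩ Vᶜ`). -/
def himp (imp : H → H → H) (one : H) (U V : Set (Set H)) : Set (Set H) :=
  {P | IsIrr imp one P ∧ ∀ Q : Set H, IsIrr imp one Q → P ⊆ Q → Q ∈ U → Q ∈ V}

/-- Frontal operator on a Hilbert algebra. -/
def IsFrontal (imp : H → H → H) (one : H) (t : H → H) : Prop :=
  (∀ a b : H, hle imp one (t (imp a b)) (imp (t a) (t b))) ∧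
  (∀ a : H, hle imp one a (t a)) ∧
  (∀ a b : H, hle imp one (t a) (imp (imp (imp b a) b) b))

/-- The elements of `⟨φ[H]⟩`: finite (nonempty) intersections `φ(a₁) ∩ ⋯ ∩ φ(aₙ)`. -/
def gen (imp : H → H → H) (one : H) (U : Set (Set H)) : Prop :=
  ∃ l : List H, l ≠ [] ∧ U = {P | IsIrr imp one P ∧ ∀ a ∈ l, a ∈ P}

/-- The π-extension `τ^π` of a unary map `t` to the upsets of `X(H)`. -/
def tpi (imp : H → H → H) (one : H) (t : H → H) (U : Set (Set H)) : Set (Set H) :=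
  {P | IsIrr imp one P ∧ ∀ Q : Set H, IsIrr imp one Q → t ⁻¹' P ⊆ Q → Q ∈ U}

/-- Maximal elements (w.r.t. inclusion) of a family of sets. -/
def Mx (S : Set (Set H)) : Set (Set H) := {P ∈ S | ∀ Q ∈ S, P ⊆ Q → P = Q}

/-- Relative complement in `X(H)`. -/
def Xc (imp : H → H → H) (one : H) (U : Set (Set H)) : Set (Set H) :=
  {P | IsIrr imp one P ∧ P ∉ U}

/-- Downset (within `X(H)`) generated by a family `S`. -/
def dn (imp : H → H → H) (one : H) (S : Set (Set H)) : Set (Set H) :=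
  {P | IsIrr imp one P ∧ ∃ Q ∈ S, P ⊆ Q}

/-- Implicative semilattice axioms for `(inf, imp, one)`. -/
def IsImpSL (inf : H → H → H) (imp : H → H → H) (one : H) : Prop :=
  (∀ a b : H, inf a b = inf b a) ∧
  (∀ a b c : H, inf (inf a b) c = inf a (inf b c)) ∧
  (∀ a : H, inf a a = a) ∧
  (∀ a : H, inf a one = a) ∧
  (∀ a b c : H, inf (inf a b) c = inf a b ↔ inf a (imp b c) = a)

/-- The semilattice order: `a ≤ b` iff `a ∧ b = a`. -/
def sle (inf : H → H → H) (a b : H) : Prop := inf a b = a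

end FH

/-- In a nonempty chain of sets, finitely many elements scattered across the
chain all lie in a single member. -/
private lemma chain_list_bound {H : Type*} (c : Set (Set H))
    (hc : IsChain (· ⊆ ·) c) (F0 : Set H) (hF0 : F0 ∈ c) :
    ∀ l : List H, (∀ a ∈ l, a ∈ ⋃₀ c) → ∃ F ∈ c, ∀ a ∈ l, a ∈ F := by
  intro l
  induction l with
  | nil => exact fun _ => ⟨F0, hF0, by simp⟩
  | cons b l ih =>
    intro h
    obtain ⟨F1, hF1c, hF1⟩ := ih (fun a ha => h a (List.mem_cons_of_mem _ ha))
    obtain ⟨F2, hF2c, hF2⟩ := h b List.mem_cons_self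
    rcases hc.total hF1c hF2c with hsub | hsub
    · exact ⟨F2, hF2c, fun a ha => by
        rcases List.mem_cons.1 ha with rfl | ha
        · exact hF2
        · exact hsub (hF1 a ha)⟩
    · exact ⟨F1, hF1c, fun a ha => by
        rcases List.mem_cons.1 ha with rfl | ha
        · exact hsub hF2
        · exact hF1 a ha⟩

/-- Core lemma: every irreducible implicative filter omitting some element of a
list `l` extends to one that is maximal among irreducible filters omitting some
element of `l`. -/
private lemma core {H : Type*} (imp : H → H → H) (one : H) (l : List H) (P : Set H)
    (hP : FH.IsIrr imp one P) (hex : ∃ a ∈ l, a ∉ P) :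
    ∃ Q, FH.IsIrr imp one Q ∧ (∃ a ∈ l, a ∉ Q) ∧ P ⊆ Q ∧
      ∀ R, FH.IsIrr imp one R → (∃ a ∈ l, a ∉ R) → Q ⊆ R → Q = R := by
  set T : Set (Set H) :=
    {F | FH.IsImpFilter imp one F ∧ P ⊆ F ∧ ∃ a ∈ l, a ∉ F} with hT
  have hPT : P ∈ T := ⟨hP.1, subset_rfl, hex⟩
  have hub : ∀ c ⊆ T, IsChain (· ⊆ ·) c → c.Nonempty → ∃ ub ∈ T, ∀ s ∈ c, s ⊆ ub := by
    intro c hcT hc ⟨F0, hF0⟩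
    have homit : ∃ a ∈ l, a ∉ ⋃₀ c := by
      by_contra hcon
      push_neg at hcon
      obtain ⟨F, hFc, hFall⟩ := chain_list_bound c hc F0 hF0 l hcon
      obtain ⟨a, hal, haF⟩ := (hcT hFc).2.2
      exact haF (hFall a hal)
    refine ⟨⋃₀ c, ⟨⟨?_, ?_⟩, ?_, homit⟩, fun s hs => Set.subset_sUnion_of_mem hs⟩
    · exact ⟨F0, hF0, (hcT hF0).1.1⟩
    · rintro x y ⟨F1, hF1c, hx⟩ ⟨F2, hF2c, hxy⟩
      rcases hc.total hF1c hF2c with hsub | hsub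
      · exact ⟨F2, hF2c, (hcT hF2c).1.2 x y (hsub hx) hxy⟩
      · exact ⟨F1, hF1c, (hcT hF1c).1.2 x y hx (hsub hxy)⟩
    · exact fun x hx => ⟨F0, hF0, (hcT hF0).2.1 hx⟩
  obtain ⟨Q, hPQ, hQmax⟩ := zorn_subset_nonempty T hub P hPT
  obtain ⟨hQfil, hPQ', hQomit⟩ := hQmax.prop
  -- any implicative filter strictly above Q contains all elements of l
  have hsup : ∀ F : Set H, FH.IsImpFilter imp one F → Q ⊆ F → Q ≠ F →
      ∀ a ∈ l, a ∈ F := by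
    intro F hF hQF hne a hal
    by_contra haF
    exact hne (hQmax.eq_of_subset ⟨hF, hPQ'.trans hQF, a, hal, haF⟩ hQF)
  have hQirr : FH.IsIrr imp one Q := by
    refine ⟨hQfil, ?_, ?_⟩
    · intro huniv
      obtain ⟨a, _, haQ⟩ := hQomit
      exact haQ (huniv ▸ Set.mem_univ a)
    · intro F1 F2 h1 h2 heq
      by_contra hcon
      push_neg at hcon
      obtain ⟨a, hal, haQ⟩ := hQomit
      have ha1 : a ∈ F1 := hsup F1 h1 (heq ▸ Set.inter_subset_left) hcon.1 a hal
      have ha2 : a ∈ F2 := hsup F2 h2 (heq ▸ Set.inter_subset_right) hcon.2 a hal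
      exact haQ (heq ▸ Set.mem_inter ha1 ha2)
  refine ⟨Q, hQirr, hQomit, hPQ, ?_⟩
  intro R hR hRomit hQR
  exact hQmax.eq_of_subset ⟨hR.1, hPQ'.trans hQR, hRomit⟩ hQR

/-- For a Hilbert algebra `H` and `a₁, …, aₙ ∈ H`,
`⋃ᵢ φ(aᵢ)ᶜ = ((⋃ᵢ φ(aᵢ)ᶜ)_M]` (complements relative to `X(H)`, downsets within
`X(H)`).  Consequently, for every `U ∈ ⟨φ[H]⟩`, with `S^π(U) = U ∪ (Uᶜ)_M` one
has `S^π(U) ⇒ U = U`. -/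
theorem stmt_17 {H : Type*} (imp : H → H → H) (one : H)
    (hH : FH.IsHilbert imp one) (n : ℕ) (a : Fin n → H) :
    (⋃ i, FH.Xc imp one (FH.phi imp one (a i))) =
      FH.dn imp one (FH.Mx (⋃ i, FH.Xc imp one (FH.phi imp one (a i)))) ∧
    (∀ U, FH.gen imp one U →
      FH.himp imp one (U ∪ FH.Mx (FH.Xc imp one U)) U = U) := by

  classical
  set l : List H := List.ofFn a with hl
  have hmem : ∀ P : Set H, P ∈ (⋃ i, FH.Xc imp one (FH.phi imp one (a i))) ↔
      FH.IsIrr imp one P ∧ ∃ b ∈ l, b ∉ P := by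
    intro P
    simp only [Set.mem_iUnion, FH.Xc, FH.phi, Set.mem_setOf_eq, hl, List.mem_ofFn]
    constructor
    · rintro ⟨i, hPirr, hnot⟩
      exact ⟨hPirr, a i, ⟨i, rfl⟩, fun hmem => hnot ⟨hPirr, hmem⟩⟩
    · rintro ⟨hPirr, b, ⟨i, rfl⟩, hb⟩
      exact ⟨i, hPirr, fun h => hb h.2⟩
  constructor
  · ext P
    constructor
    · intro hPS
      obtain ⟨hPirr, hex⟩ := (hmem P).1 hPS
      obtain ⟨Q, hQirr, hQomit, hPQ, hQmax⟩ := core imp one l P hPirr hex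
      refine ⟨hPirr, Q, ⟨(hmem Q).2 ⟨hQirr, hQomit⟩, ?_⟩, hPQ⟩
      intro R hRS hQR
      obtain ⟨hRirr, hRomit⟩ := (hmem R).1 hRS
      exact hQmax R hRirr hRomit hQR
    · rintro ⟨hPirr, Q, ⟨hQS, _⟩, hPQ⟩
      obtain ⟨hQirr, b, hbl, hbQ⟩ := (hmem Q).1 hQS
      exact (hmem P).2 ⟨hPirr, b, hbl, fun hbP => hbQ (hPQ hbP)⟩
  · rintro U ⟨m, -, rfl⟩
    set U : Set (Set H) := {P | FH.IsIrr imp one P ∧ ∀ b ∈ m, b ∈ P} with hU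
    have hXc : ∀ P : Set H, P ∈ FH.Xc imp one U ↔
        FH.IsIrr imp one P ∧ ∃ b ∈ m, b ∉ P := by
      intro P
      constructor
      · rintro ⟨hPirr, hPU⟩
        refine ⟨hPirr, ?_⟩
        by_contra hcon
        push_neg at hcon
        exact hPU ⟨hPirr, hcon⟩
      · rintro ⟨hPirr, b, hbm, hbP⟩
        exact ⟨hPirr, fun hPU => hbP (hPU.2 b hbm)⟩
    ext P
    constructor
    · rintro ⟨hPirr, hcond⟩
      by_contra hPU
      have hex : ∃ b ∈ m, b ∉ P := by
        by_contra hcon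
        push_neg at hcon
        exact hPU ⟨hPirr, hcon⟩
      obtain ⟨Q, hQirr, hQomit, hPQ, hQmax⟩ := core imp one m P hPirr hex
      have hQnU : Q ∉ U := fun hQU => by
        obtain ⟨b, hbm, hbQ⟩ := hQomit
        exact hbQ (hQU.2 b hbm)
      have hQMx : Q ∈ FH.Mx (FH.Xc imp one U) := by
        refine ⟨⟨hQirr, hQnU⟩, ?_⟩
        intro R hR hQR
        obtain ⟨hRirr, hRomit⟩ := (hXc R).1 hR
        exact hQmax R hRirr hRomit hQR
      exact hQnU (hcond Q hQirr hPQ (Or.inr hQMx))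
    · intro hPU
      refine ⟨hPU.1, ?_⟩
      intro Q hQ hPQ _
      exact ⟨hQ, fun b hbm => hPQ (hPU.2 b hbm)⟩
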